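/- Fix a positive integer h and suppose σ_0(y) ≤ ζ_0(y) ≤ σ_0(y) + h for all y ∈ ℝ^d. Then σ_T(x) ≤ ζ_T(x) ≤ σ_T(x) + h for all x ∈ ℝ^d. Moreover, defining A_0 = { y : σ_0(y) ∈ ℤ and ζ_0(y) = σ_0(y) + h } and A_T = { x : σ_T(x) ∈ ℤ and ζ_T(x) = σ_T(x) + h }, one has A_T = { x : σ_T(x) has a maximizer y with y ∈ A_0 }. (Lemma 9.1(b), stated pathwise.) -/

import Mathlib

open Set

noncomputable section

/-- `y` is a maximizer for `σT(x) = sup_{y ≤ x} (σ0(y) + T(y,x))`. -/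
def IsMaximizer {d : ℕ} (σ0 σT : (Fin d → ℝ) → WithBot ℤ)
    (T : (Fin d → ℝ) → (Fin d → ℝ) → ℕ) (x y : Fin d → ℝ) : Prop :=
  y ≤ x ∧ σT x = σ0 y + (T y x : WithBot ℤ)

/-- `σT` is the (finite-valued) supremum `σT(x) = sup_{y ≤ x} (σ0(y) + T(y,x))`,
and a maximizer exists whenever `σT(x) > −∞`. -/
def IsSupProcess {d : ℕ} (σ0 σT : (Fin d → ℝ) → WithBot ℤ)
    (T : (Fin d → ℝ) → (Fin d → ℝ) → ℕ) : Prop :=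
  (∀ x y : Fin d → ℝ, y ≤ x → σ0 y + (T y x : WithBot ℤ) ≤ σT x) ∧
  (∀ (x : Fin d → ℝ) (b : WithBot ℤ),
      (∀ y : Fin d → ℝ, y ≤ x → σ0 y + (T y x : WithBot ℤ) ≤ b) → σT x ≤ b) ∧
  (∀ x : Fin d → ℝ, σT x ≠ ⊥ → ∃ y : Fin d → ℝ, IsMaximizer σ0 σT T x y)

/-- Lemma 9.1(b), pathwise. If `σ0 ≤ ζ0 ≤ σ0 + h` then `σT ≤ ζT ≤ σT + h`, and the
defect set `A_T = {x : σT(x) ∈ ℤ, ζT(x) = σT(x) + h}` equals the set of `x` such that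
`σT(x)` has a maximizer `y` in `A_0 = {y : σ0(y) ∈ ℤ, ζ0(y) = σ0(y) + h}`. -/
theorem coupling_defect_set
    (d : ℕ) (hd : 1 ≤ d)
    (T : (Fin d → ℝ) → (Fin d → ℝ) → ℕ) (hT : ∀ x, T x x = 0)
    (σ0 σT ζ0 ζT : (Fin d → ℝ) → WithBot ℤ)
    (hσ : IsSupProcess σ0 σT T) (hζ : IsSupProcess ζ0 ζT T)
    (h : ℕ) (hh : 1 ≤ h)
    (hcoup : ∀ y : Fin d → ℝ, σ0 y ≤ ζ0 y ∧ ζ0 y ≤ σ0 y + (h : WithBot ℤ)) :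
    (∀ x : Fin d → ℝ, σT x ≤ ζT x ∧ ζT x ≤ σT x + (h : WithBot ℤ)) ∧
    (∀ x : Fin d → ℝ,
        (σT x ≠ ⊥ ∧ ζT x = σT x + (h : WithBot ℤ)) ↔
        ∃ y : Fin d → ℝ, IsMaximizer σ0 σT T x y ∧
          σ0 y ≠ ⊥ ∧ ζ0 y = σ0 y + (h : WithBot ℤ)) := by
  obtain ⟨hσ1, hσ2, hσ3⟩ := hσ
  obtain ⟨hζ1, hζ2, hζ3⟩ := hζ
  have key : ∀ x : Fin d → ℝ, σT x ≤ ζT x ∧ ζT x ≤ σT x + (h : WithBot ℤ) := by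
    intro x
    constructor
    · refine hσ2 x _ (fun y hy => ?_)
      exact le_trans (add_le_add_left (hcoup y).1 _) (hζ1 x y hy)
    · refine hζ2 x _ (fun y hy => ?_)
      calc ζ0 y + (T y x : WithBot ℤ)
          ≤ (σ0 y + (h : WithBot ℤ)) + (T y x : WithBot ℤ) :=
            add_le_add_left (hcoup y).2 _
        _ = (σ0 y + (T y x : WithBot ℤ)) + (h : WithBot ℤ) := add_right_comm _ _ _
        _ ≤ σT x + (h : WithBot ℤ) := add_le_add_left (hσ1 x y hy) _
  refine ⟨key, fun x => ⟨?_, ?_⟩⟩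
  · rintro ⟨hne, heq⟩
    have hζne : ζT x ≠ ⊥ := by
      rw [heq]; simp [WithBot.add_eq_bot, hne]
    obtain ⟨y, hyx, hmax⟩ := hζ3 x hζne
    have hσ0ne : σ0 y ≠ ⊥ := by
      intro hb
      apply hζne
      rw [hmax]
      have : ζ0 y = ⊥ := by
        have := (hcoup y).2
        rw [hb] at this
        simpa using this
      simp [this]
    have hζ0 : ζ0 y ≤ σ0 y + (h : WithBot ℤ) := (hcoup y).2
    -- σT x ≤ σ0 y + T y x
    have h1 : σT x + (h : WithBot ℤ) ≤ (σ0 y + (T y x : WithBot ℤ)) + (h : WithBot ℤ) := by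
      calc σT x + (h : WithBot ℤ) = ζT x := heq.symm
        _ = ζ0 y + (T y x : WithBot ℤ) := hmax
        _ ≤ (σ0 y + (h : WithBot ℤ)) + (T y x : WithBot ℤ) := add_le_add_left hζ0 _
        _ = (σ0 y + (T y x : WithBot ℤ)) + (h : WithBot ℤ) := add_right_comm _ _ _
    have hcanc : ∀ a b : WithBot ℤ, a + (h : WithBot ℤ) ≤ b + (h : WithBot ℤ) → a ≤ b :=
      fun a b hab => (WithBot.add_le_add_iff_right
        (by exact_mod_cast WithBot.natCast_ne_bot h)).mp hab
    have h2 : σT x ≤ σ0 y + (T y x : WithBot ℤ) := hcanc _ _ h1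
    have hmaxσ : σT x = σ0 y + (T y x : WithBot ℤ) := le_antisymm h2 (hσ1 x y hyx)
    refine ⟨y, ⟨hyx, hmaxσ⟩, hσ0ne, ?_⟩
    -- ζ0 y = σ0 y + h
    have h3 : ζ0 y + (T y x : WithBot ℤ) = (σ0 y + (h : WithBot ℤ)) + (T y x : WithBot ℤ) := by
      calc ζ0 y + (T y x : WithBot ℤ) = ζT x := hmax.symm
        _ = σT x + (h : WithBot ℤ) := heq
        _ = (σ0 y + (T y x : WithBot ℤ)) + (h : WithBot ℤ) := by rw [hmaxσ]
        _ = (σ0 y + (h : WithBot ℤ)) + (T y x : WithBot ℤ) := add_right_comm _ _ _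
    exact WithBot.add_right_cancel (by exact_mod_cast WithBot.natCast_ne_bot _) h3
  · rintro ⟨y, ⟨hyx, hmaxσ⟩, hσ0ne, hζ0eq⟩
    have hσTne : σT x ≠ ⊥ := by
      rw [hmaxσ]; simp [WithBot.add_eq_bot, hσ0ne]
    refine ⟨hσTne, le_antisymm (key x).2 ?_⟩
    calc σT x + (h : WithBot ℤ)
        = (σ0 y + (T y x : WithBot ℤ)) + (h : WithBot ℤ) := by rw [hmaxσ]
      _ = (σ0 y + (h : WithBot ℤ)) + (T y x : WithBot ℤ) := add_right_comm _ _ _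
      _ = ζ0 y + (T y x : WithBot ℤ) := by rw [hζ0eq]
      _ ≤ ζT x := hζ1 x y hyx

end
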